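/- For all integers s ≥ 1 and m ≥ 2 with t = 2m − 1, a subset A of the vertex set of H(t,s) is a dominating set of H(t,s) if and only if A ∩ V(K_X) ≠ ∅ for every m-element subset X of V(T). -/

import Mathlib

/-- The vertex set of the graph `H(t,s)` (with `m`-subsets of the `t`-clique used as
attachment sets): the `t` vertices of the complete graph `T` together with, for each
`m`-subset `X` of `V(T)`, the `s` vertices of `K_X` not identified with `X`. -/
def HVert (t m s : ℕ) : Type :=
  Fin t ⊕ ({X : Finset (Fin t) // X.card = m} × Fin s)

/-- The graph `H(t,s)`: a complete graph `T` on `t` vertices, and for each `m`-subset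
`X` of `V(T)` a complete graph `K_X` on `s + m` vertices, with `m` of the vertices of
`K_X` identified with `X`. -/
def HGraph (t m s : ℕ) : SimpleGraph (HVert t m s) :=
  SimpleGraph.fromRel (fun a b =>
    match a, b with
    | Sum.inl _, Sum.inl _ => True
    | Sum.inl x, Sum.inr q => x ∈ q.1.1
    | Sum.inr _, Sum.inl _ => False
    | Sum.inr q, Sum.inr r => q.1 = r.1)

/-- The vertex set of the clique `K_X` inside `H(t,s)`: the vertices of `X` together
with the `s` extra vertices attached to `X`. -/
def KVerts (t m s : ℕ) (X : {X : Finset (Fin t) // X.card = m}) :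
    Set (HVert t m s) :=
  {v | (∃ x ∈ X.1, v = Sum.inl x) ∨ ∃ i : Fin s, v = Sum.inr (X, i)}

/-- `A` is a dominating set of `G`: every vertex is in `A` or adjacent to a vertex
of `A`. -/
def IsDominatingSet {W : Type*} (G : SimpleGraph W) (A : Set W) : Prop :=
  ∀ v, v ∈ A ∨ ∃ a ∈ A, G.Adj a v

/-- for `s ≥ 1`, `m ≥ 2` and `t = 2m - 1`, a set `A` of vertices of
`H(t,s)` is dominating if and only if it meets `V(K_X)` for every `m`-subset `X`
of `V(T)`. -/
theorem HGraph_dominating_iff (m s : ℕ) (hm : 2 ≤ m) (hs : 1 ≤ s)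
    (A : Set (HVert (2 * m - 1) m s)) :
    IsDominatingSet (HGraph (2 * m - 1) m s) A ↔
      ∀ X : {X : Finset (Fin (2 * m - 1)) // X.card = m},
        (A ∩ KVerts (2 * m - 1) m s X).Nonempty := by
  constructor
  · intro hdom X
    obtain h | ⟨a, ha, hadj⟩ := hdom (Sum.inr (X, ⟨0, hs⟩))
    · exact ⟨_, h, Or.inr ⟨_, rfl⟩⟩
    · refine ⟨a, ha, ?_⟩
      rw [HGraph] at hadj
      have hadj := (SimpleGraph.fromRel_adj _ _ _).mp hadj
      obtain ⟨hne, hrel⟩ := hadj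
      match a, hrel with
      | Sum.inl x, hrel =>
        exact Or.inl ⟨x, by simpa using hrel, rfl⟩
      | Sum.inr q, hrel =>
        have : q.1 = X := by rcases (by simpa using hrel : q.1 = X ∨ X = q.1) with h | h <;> simp [h]
        exact Or.inr ⟨q.2, by rw [← this]⟩
  · intro hA v
    match v with
    | Sum.inr (X, i) =>
      obtain ⟨a, ha, hk⟩ := hA X
      by_cases hav : a = Sum.inr (X, i)
      · exact Or.inl (hav ▸ ha)
      · refine Or.inr ⟨a, ha, ?_⟩
        rw [HGraph]
        refine (SimpleGraph.fromRel_adj _ _ _).mpr ?_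
        refine ⟨hav, ?_⟩
        rcases hk with ⟨x, hx, rfl⟩ | ⟨j, rfl⟩
        · exact Or.inl (by simpa using hx)
        · exact Or.inl (by simp)
    | Sum.inl x =>
      -- find an m-subset containing x
      have hcard : ({x} : Finset (Fin (2 * m - 1))).card ≤ m := by simp; omega
      have hm' : m ≤ (Finset.univ : Finset (Fin (2 * m - 1))).card := by
        simp; omega
      obtain ⟨X, hxX, -, hXcard⟩ :=
        Finset.exists_subsuperset_card_eq (Finset.subset_univ {x}) hcard hm'
      have hxX : x ∈ X := hxX (Finset.mem_singleton_self x)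
      obtain ⟨a, ha, hk⟩ := hA ⟨X, hXcard⟩
      by_cases hav : a = Sum.inl x
      · exact Or.inl (hav ▸ ha)
      · refine Or.inr ⟨a, ha, ?_⟩
        rw [HGraph]
        refine (SimpleGraph.fromRel_adj _ _ _).mpr ?_
        refine ⟨hav, ?_⟩
        rcases hk with ⟨y, hy, rfl⟩ | ⟨j, rfl⟩
        · exact Or.inl trivial
        · exact Or.inr (by simpa using hxX)
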